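/- Let k = 2 and let T = {t ∈ {0,1}^{Σ*} : t_w = t_z whenever |w| = |z|} be the tree-shift of layer-constant binary labeled trees. Then T is uniform CPC-block gluing (indeed CPC-block gluing with P = Σ), but T is neither CPC-strongly irreducible nor strongly irreducible. -/

import Mathlib

namespace TreeShiftPaper

/-- Words over the alphabet `Σ = {0, …, k-1}`: nodes of the `k`-tree. -/
abbrev Word (k : ℕ) := List (Fin k)

variable {k : ℕ} {A : Type*}

/-- A set of words is prefix-closed if it contains every prefix of each of its elements. -/
def PrefixClosed (S : Set (Word k)) : Prop :=
  ∀ w ∈ S, ∀ v : Word k, v <+: w → v ∈ S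

/-- The pattern with support `S` and labels `u` appears in the labeled tree `t`. -/
def PatternAppears (t : Word k → A) (S : Set (Word k)) (u : Word k → A) : Prop :=
  ∃ s : Word k, ∀ w ∈ S, t (s ++ w) = u w

/-- The set of labeled trees avoiding every pattern of the forbidden family `F`. -/
def treeShiftOf (F : Set ((Set (Word k)) × (Word k → A))) : Set (Word k → A) :=
  {t | ∀ p ∈ F, ¬ PatternAppears t p.1 p.2}

/-- `T` is a tree-shift: it is defined by some forbidden set of patterns
(each with finite prefix-closed support). -/
def IsTreeShift (T : Set (Word k → A)) : Prop :=
  ∃ F : Set ((Set (Word k)) × (Word k → A)),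
    (∀ p ∈ F, p.1.Finite ∧ PrefixClosed p.1) ∧ T = treeShiftOf F

/-- `T` is a tree-shift of finite type: the forbidden set can be chosen finite. -/
def IsTreeSFT (T : Set (Word k → A)) : Prop :=
  ∃ F : Set ((Set (Word k)) × (Word k → A)),
    F.Finite ∧ (∀ p ∈ F, p.1.Finite ∧ PrefixClosed p.1) ∧ T = treeShiftOf F

/-- The finite word `w` occurs in the one-sided sequence `x` at position `i`. -/
def OccursAt (x : ℕ → A) (i : ℕ) (w : List A) : Prop :=
  ∀ j : Fin w.length, x (i + (j : ℕ)) = w.get j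

/-- The one-sided shift space defined by the forbidden set of words `F`. -/
def shiftOf (F : Set (List A)) : Set (ℕ → A) :=
  {x | ∀ w ∈ F, ∀ i : ℕ, ¬ OccursAt x i w}

/-- `X` is a one-sided shift space. -/
def IsShift (X : Set (ℕ → A)) : Prop := ∃ F : Set (List A), X = shiftOf F

/-- `X` is a one-sided shift of finite type. -/
def IsSFT (X : Set (ℕ → A)) : Prop :=
  ∃ F : Set (List A), F.Finite ∧ X = shiftOf F

/-- A chain: an infinite path in the tree starting at the root. -/
def IsChain (c : ℕ → Word k) : Prop :=
  c 0 = [] ∧ ∀ n : ℕ, ∃ i : Fin k, c (n + 1) = c n ++ [i]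

/-- The hom tree-shift associated with a one-sided shift space `X`: labeled trees whose
projection along every chain lies in `X`. -/
def homTree (k : ℕ) (X : Set (ℕ → A)) : Set (Word k → A) :=
  {t | ∀ c : ℕ → Word k, IsChain c → (fun n => t (c n)) ∈ X}

/-- `Y` is a sofic one-sided shift: image of an SFT under a sliding block code induced
by an `n`-block map. -/
def IsSofic (Y : Set (ℕ → A)) : Prop :=
  ∃ (B : Type) (_ : Fintype B) (X : Set (ℕ → B)) (n : ℕ) (f : (ℕ → B) → A),
    IsSFT X ∧ (∀ u v : ℕ → B, (∀ j < n, u j = v j) → f u = f v) ∧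
    (fun x : ℕ → B => fun i => f (fun j => x (i + j))) '' X = Y

/-- `T` is a sofic tree-shift: image of a tree-SFT under the map induced by an
`n`-block map. -/
def IsSoficTree (T : Set (Word k → A)) : Prop :=
  ∃ (B : Type) (_ : Fintype B) (T' : Set (Word k → B)) (n : ℕ) (g : (Word k → B) → A),
    IsTreeSFT T' ∧
    (∀ u v : Word k → B, (∀ w : Word k, w.length ≤ n → u w = v w) → g u = g v) ∧
    (fun t : Word k → B => fun w => g (fun z => t (w ++ z))) '' T' = T

/-- The Markov tree-shift determined by `k` binary `d × d` transition matrices. -/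
def markovTree (k d : ℕ) (M : Fin k → Matrix (Fin d) (Fin d) Bool) :
    Set (Word k → Fin d) :=
  {t | ∀ w : Word k, ∀ i : Fin k, M i (t w) (t (w ++ [i])) = true}

/-- The one-sided Markov (vertex) shift determined by a binary `d × d` matrix. -/
def markovShift (d : ℕ) (M : Matrix (Fin d) (Fin d) Bool) : Set (ℕ → Fin d) :=
  {x | ∀ i : ℕ, M (x i) (x (i + 1)) = true}

/-- The pattern with support `S` and labels `u` is admissible in `T`. -/
def AdmissiblePattern (T : Set (Word k → A)) (S : Set (Word k)) (u : Word k → A) : Prop :=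
  ∃ t ∈ T, ∃ s : Word k, ∀ w ∈ S, t (s ++ w) = u w

/-- The `n`-block `u` (a labeling of `Δ_n`) is admissible in `T`. -/
def AdmissibleBlock (T : Set (Word k → A)) (n : ℕ) (u : Word k → A) : Prop :=
  ∃ t ∈ T, ∃ s : Word k, ∀ w : Word k, w.length ≤ n → t (s ++ w) = u w

/-- Word distance on the `k`-tree:
`d(x,y) = |x| + |y| - 2 · max{|w| : w` a common prefix of `x` and `y}`. -/
noncomputable def wordDist (x y : Word k) : ℕ :=
  x.length + y.length - 2 * sSup {m : ℕ | ∃ w : Word k, w <+: x ∧ w <+: y ∧ w.length = m}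

/-- The boundary `∂S = {w ∈ S : wΣ ∩ S = ∅}` of a support `S`. -/
def boundary (S : Set (Word k)) : Set (Word k) :=
  {w | w ∈ S ∧ ∀ i : Fin k, w ++ [i] ∉ S}

/-- A complete prefix code: a finite prefix set such that every word of length at least
`max_{z ∈ P} |z|` has a prefix in `P`. -/
def IsCPC (P : Set (Word k)) : Prop :=
  P.Finite ∧ (∀ x ∈ P, ∀ y ∈ P, x <+: y → x = y) ∧
  ∀ w : Word k, (∀ z ∈ P, z.length ≤ w.length) → ∃ x ∈ P, x <+: w

/-- Strong irreducibility with gap `N`. -/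
def SIGap (T : Set (Word k → A)) (N : ℕ) : Prop :=
  ∀ (Su Sv : Set (Word k)) (u v : Word k → A),
    Su.Finite → PrefixClosed Su → Sv.Finite → PrefixClosed Sv →
    AdmissiblePattern T Su u → AdmissiblePattern T Sv v →
    ∀ w : Word k, (∀ h ∈ Su, N ≤ wordDist w h) →
      ∃ t ∈ T, (∀ z ∈ Su, t z = u z) ∧ ∀ z ∈ Sv, t (w ++ z) = v z

/-- `T` is strongly irreducible (SI). -/
def SI (T : Set (Word k → A)) : Prop := ∃ N : ℕ, SIGap T N

/-- `T` is block gluing (BG). -/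
def BG (T : Set (Word k → A)) : Prop :=
  ∃ N : ℕ, ∀ (n m : ℕ) (u v : Word k → A),
    AdmissibleBlock T n u → AdmissibleBlock T m v →
    ∀ w : Word k, N + n ≤ w.length →
      ∃ t ∈ T, (∀ z : Word k, z.length ≤ n → t z = u z) ∧
        ∀ z : Word k, z.length ≤ m → t (w ++ z) = v z

/-- `T` is topologically mixing (TM). -/
def TM (T : Set (Word k → A)) : Prop :=
  ∀ H₁ H₂ : Set (Word k), H₁.Finite → H₂.Finite →
    ∃ N : ℕ, ∀ t₁ ∈ T, ∀ t₂ ∈ T, ∀ w : Word k, (∀ h ∈ H₁, N ≤ wordDist w h) →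
      ∃ t ∈ T, (∀ z ∈ H₁, t z = t₁ z) ∧ ∀ z ∈ H₂, t (w ++ z) = t₂ z

/-- `T` is irreducible (IR). -/
def IR (T : Set (Word k → A)) : Prop :=
  ∀ (n m : ℕ) (u v : Word k → A),
    AdmissibleBlock T n u → AdmissibleBlock T m v →
    ∃ w : Word k, n < w.length ∧
      ∃ t ∈ T, (∀ z : Word k, z.length ≤ n → t z = u z) ∧
        ∀ z : Word k, z.length ≤ m → t (w ++ z) = v z

/-- `T` is CPC-strongly irreducible via the prefix set `P`. -/
def CPCSIWith (T : Set (Word k → A)) (P : Set (Word k)) : Prop :=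
  ∀ (Su Sv : Set (Word k)) (u v : Word k → A),
    Su.Finite → PrefixClosed Su → Sv.Finite → PrefixClosed Sv →
    AdmissiblePattern T Su u → AdmissiblePattern T Sv v →
    ∃ t ∈ T, (∀ z ∈ Su, t z = u z) ∧
      ∀ w ∈ boundary Su, ∀ z ∈ P, ∀ y ∈ Sv, t (w ++ z ++ y) = v y

/-- `T` is CPC-strongly irreducible (CPC SI). -/
def CPCSI (T : Set (Word k → A)) : Prop := ∃ P : Set (Word k), IsCPC P ∧ CPCSIWith T P

/-- `T` is uniform CPC-strongly irreducible (CPC USI): CPC SI with `P = Σ^N`. -/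
def CPCUSI (T : Set (Word k → A)) : Prop :=
  ∃ N : ℕ, CPCSIWith T {z : Word k | z.length = N}

/-- `T` is CPC-block gluing via the prefix set `P`. -/
def CPCBGWith (T : Set (Word k → A)) (P : Set (Word k)) : Prop :=
  ∀ (n m : ℕ) (u v : Word k → A),
    AdmissibleBlock T n u → AdmissibleBlock T m v →
    ∃ t ∈ T, (∀ z : Word k, z.length ≤ n → t z = u z) ∧
      ∀ w : Word k, w.length = n → ∀ z ∈ P, ∀ y : Word k, y.length ≤ m →
        t (w ++ z ++ y) = v y

/-- `T` is CPC-block gluing (CPC BG). -/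
def CPCBG (T : Set (Word k → A)) : Prop := ∃ P : Set (Word k), IsCPC P ∧ CPCBGWith T P

/-- `T` is uniform CPC-block gluing (CPC UBG): CPC BG with `P = Σ^N`. -/
def CPCUBG (T : Set (Word k → A)) : Prop :=
  ∃ N : ℕ, CPCBGWith T {z : Word k | z.length = N}

/-- `T` is CPC-irreducible (CPC IR). -/
def CPCIR (T : Set (Word k → A)) : Prop :=
  ∀ (n m : ℕ) (u v : Word k → A),
    AdmissibleBlock T n u → AdmissibleBlock T m v →
    ∃ P : Set (Word k), IsCPC P ∧ (∀ z ∈ P, n + 1 ≤ z.length) ∧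
      ∃ t ∈ T, (∀ z : Word k, z.length ≤ n → t z = u z) ∧
        ∀ w ∈ P, ∀ y : Word k, y.length ≤ m → t (w ++ y) = v y

/-- The finite word `u` is admissible in the one-sided shift space `X`. -/
def WordAdmissible (X : Set (ℕ → A)) (u : List A) : Prop :=
  ∃ x ∈ X, ∃ i : ℕ, OccursAt x i u

/-- The one-sided shift space `X` is topologically mixing. -/
def MixingShift (X : Set (ℕ → A)) : Prop :=
  ∀ u v : List A, WordAdmissible X u → WordAdmissible X v →
    ∃ N : ℕ, ∀ n ≥ N, ∃ x ∈ X, OccursAt x 0 u ∧ OccursAt x (u.length + n) v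

/-- The one-sided shift space `X` is transitive (irreducible). -/
def TransitiveShift (X : Set (ℕ → A)) : Prop :=
  ∀ u v : List A, WordAdmissible X u → WordAdmissible X v →
    ∃ x ∈ X, ∃ n : ℕ, u.length ≤ n ∧ OccursAt x 0 u ∧ OccursAt x n v

end TreeShiftPaper

namespace TreeShiftPaper

/-- The tree-shift of layer-constant binary labeled trees (`k = 2`). -/
def layerConstTree : Set (Word 2 → Fin 2) :=
  {t | ∀ w z : Word 2, w.length = z.length → t w = t z}

lemma layerConst_block {n : ℕ} {u : Word 2 → Fin 2}
    (h : AdmissibleBlock layerConstTree n u) :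
    ∀ w z : Word 2, w.length = z.length → w.length ≤ n → u w = u z := by
  obtain ⟨t, ht, s, hs⟩ := h
  intro w z hl hn
  rw [← hs w hn, ← hs z (hl ▸ hn)]
  exact ht _ _ (by simp [hl])

lemma prefixes_finite (l : Word 2) : {w : Word 2 | w <+: l}.Finite := by
  have : {w : Word 2 | w <+: l} = {w : Word 2 | w ∈ l.inits} := by
    ext w; simp [List.mem_inits]
  rw [this]; exact l.inits.finite_toSet

lemma lct_CPCBG : CPCBGWith layerConstTree {z : Word 2 | z.length = 1} := by
  intro n m u v hu hv
  have hu' := layerConst_block hu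
  have hv' := layerConst_block hv
  refine ⟨fun w => if w.length ≤ n then u (List.replicate w.length 0)
      else v (List.replicate (w.length - (n+1)) 0), ?_, ?_, ?_⟩
  · intro w z h
    simp only [h]
  · intro z hz
    simp only [if_pos hz]
    exact hu' _ _ (by simp) (by simpa)
  · intro w hw z hz y hy
    have hz1 : z.length = 1 := hz
    have hlen : (w ++ z ++ y).length = n + 1 + y.length := by
      simp only [List.length_append, hw, hz1]
    have hnot : ¬ (w ++ z ++ y).length ≤ n := by omega
    simp only [if_neg hnot]
    have he : (w ++ z ++ y).length - (n + 1) = y.length := by omega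
    rw [he]
    exact hv' _ _ (by simp) (by simpa)

lemma lct_not_CPCSI : ¬ CPCSI layerConstTree := by
  rintro ⟨P, ⟨hPfin, hPpre, hPcov⟩, hSI⟩
  obtain ⟨z0, hz0⟩ : P.Nonempty := by
    rcases P.eq_empty_or_nonempty with hP | hP
    · obtain ⟨x, hx, -⟩ := hPcov [] (by simp [hP])
      exact absurd hx (by simp [hP])
    · exact hP
  set Su : Set (Word 2) := {w | w <+: [0] ∨ w <+: [1,0]} with hSu
  set Sv : Set (Word 2) := {w | w <+: [0]} with hSv
  have hSufin : Su.Finite :=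
    ((prefixes_finite [0]).union (prefixes_finite [1,0])).subset (fun w hw => hw)
  have hSvfin : Sv.Finite := prefixes_finite [0]
  have hSupre : PrefixClosed Su := by
    rintro w (hw | hw) v hv
    exacts [Or.inl (hv.trans hw), Or.inr (hv.trans hw)]
  have hSvpre : PrefixClosed Sv := fun w hw v hv => hv.trans hw
  have hvmem : ∀ w ∈ Sv, w = [] ∨ w = [0] := by
    intro w hw
    have : w ∈ ([0] : Word 2).inits := (List.mem_inits _ _).mpr hw
    simpa using this
  have hadm_u : AdmissiblePattern layerConstTree Su (fun _ => (0 : Fin 2)) :=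
    ⟨fun _ => 0, fun _ _ _ => rfl, [], fun _ _ => rfl⟩
  have hadm_v : AdmissiblePattern layerConstTree Sv
      (fun y => if y = [] then (0 : Fin 2) else 1) := by
    refine ⟨fun w => if w.length = 0 then 0 else 1, ?_, [], ?_⟩
    · intro w z h; simp only [h]
    · intro w hw
      rcases hvmem w hw with h | h <;> subst h <;> simp
  obtain ⟨t, ht, hU, hB⟩ := hSI Su Sv _ _ hSufin hSupre hSvfin hSvpre hadm_u hadm_v
  have hb1 : ([0] : Word 2) ∈ boundary Su := by
    refine ⟨Or.inl List.prefix_rfl, ?_⟩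
    intro i hi
    fin_cases i <;> rcases hi with h | h <;> revert h <;> decide
  have hb2 : ([1,0] : Word 2) ∈ boundary Su := by
    refine ⟨Or.inr List.prefix_rfl, ?_⟩
    intro i hi
    fin_cases i <;> rcases hi with h | h <;> revert h <;> decide
  have h1 : t ([0] ++ z0 ++ [0]) = 1 := by
    have := hB [0] hb1 z0 hz0 [0] (by exact List.prefix_rfl)
    simpa using this
  have h2 : t ([1,0] ++ z0 ++ []) = 0 := by
    have := hB [1,0] hb2 z0 hz0 [] (by exact List.nil_prefix)
    simpa using this
  have hlen : ([0] ++ z0 ++ [0] : Word 2).length = ([1,0] ++ z0 ++ [] : Word 2).length := by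
    simp
  have := ht _ _ hlen
  rw [h1, h2] at this
  exact absurd this (by decide)

lemma lct_not_SI : ¬ SI layerConstTree := by
  rintro ⟨N, hSI⟩
  set Su : Set (Word 2) := {w | w <+: List.replicate N 0} with hSu
  have hSufin : Su.Finite := prefixes_finite _
  have hSupre : PrefixClosed Su := fun w hw v hv => hv.trans hw
  have hSvfin : ({[]} : Set (Word 2)).Finite := Set.finite_singleton _
  have hSvpre : PrefixClosed ({[]} : Set (Word 2)) := by
    rintro w rfl v hv
    simpa using List.prefix_nil.mp hv
  have hadm_u : AdmissiblePattern layerConstTree Su (fun _ => (0 : Fin 2)) :=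
    ⟨fun _ => 0, fun _ _ _ => rfl, [], fun _ _ => rfl⟩
  have hadm_v : AdmissiblePattern layerConstTree {[]} (fun _ => (1 : Fin 2)) :=
    ⟨fun _ => 1, fun _ _ _ => rfl, [], fun _ _ => rfl⟩
  have hdist : ∀ h ∈ Su, N ≤ wordDist (List.replicate N 1) h := by
    intro h hh
    have hset : {m : ℕ | ∃ w : Word 2, w <+: List.replicate N 1 ∧ w <+: h ∧ w.length = m}
        = {0} := by
      apply Set.eq_singleton_iff_unique_mem.mpr
      constructor
      · exact ⟨[], List.nil_prefix, List.nil_prefix, rfl⟩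
      · rintro m ⟨w, hw1, hw2, rfl⟩
        cases w with
        | nil => rfl
        | cons a q =>
          have h1 : a = 1 := List.eq_of_mem_replicate (hw1.subset (List.mem_cons_self (a := a) (l := q)))
          have h0 : a = 0 := List.eq_of_mem_replicate
            ((hw2.trans hh).subset (List.mem_cons_self (a := a) (l := q)))
          rw [h1] at h0
          exact absurd h0 (by decide)
    unfold wordDist
    rw [hset, csSup_singleton]
    simp
  obtain ⟨t, ht, hU, hV⟩ := hSI Su {[]} _ _ hSufin hSupre hSvfin hSvpre hadm_u hadm_v
    (List.replicate N 1) hdist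
  have h0 : t (List.replicate N 0) = 0 := hU _ List.prefix_rfl
  have h1 : t (List.replicate N 1 ++ []) = 1 := hV [] rfl
  have := ht (List.replicate N 0) (List.replicate N 1 ++ []) (by simp)
  rw [h0, h1] at this
  exact absurd this (by decide)

/-- The layer-constant tree-shift is CPC-block gluing with `P = Σ` (hence uniform
CPC-block gluing), but is neither CPC-strongly irreducible nor strongly irreducible. -/
theorem stmt17 :
    CPCBGWith layerConstTree {z : Word 2 | z.length = 1} ∧
    ¬ CPCSI layerConstTree ∧ ¬ SI layerConstTree :=
  ⟨lct_CPCBG, lct_not_CPCSI, lct_not_SI⟩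

end TreeShiftPaper
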